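/- Consider N scalar systems ẋ_i = f_i(x_i) + u_i with f_i : ℝ → ℝ continuous, each semi-passive, interconnected over a strongly connected weighted directed graph with associated Laplacian matrix L ∈ ℝ^{N×N}. Let p ≥ 1, let B_j ∈ ℝ^{N×M_j} for j = 1,…,p be matrices with nonnegative entries, let D = diag(d_1,…,d_N) with d_k = Σ_{j=1}^{p} Σ_{ℓ=1}^{M_j} [B_j]_{kℓ}, and let v_j : [0,∞) → ℝ^{M_j} be bounded external inputs. Then every solution t ↦ x̄(t) ∈ ℝ^N, defined on [0,∞), of the perturbed networked system ẋ̄ = F(x̄) − L x̄ − D x̄ + Σ_{j=1}^{p} B_j v_j(t), where F(x̄) = (f_1(x_1),…,f_N(x_N)), is bounded. -/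

import Mathlib

open Finset

/-- The scalar system `ẋ = f(x) + u` defines a semi-passive map `u ↦ x`. -/
def SemiPassive (f : ℝ → ℝ) : Prop :=
  ∃ (V H ψ : ℝ → ℝ) (ρ : ℝ),
    ContDiff ℝ 1 V ∧
    (∀ x, 0 ≤ V x) ∧
    Filter.Tendsto V (Filter.comap (fun x : ℝ => |x|) Filter.atTop) Filter.atTop ∧
    Continuous H ∧
    ContinuousOn ψ (Set.Ici 0) ∧
    (∀ r : ℝ, 0 ≤ r → 0 < ψ r) ∧
    0 < ρ ∧
    (∀ x u : ℝ, deriv V x * (f x + u) ≤ u * x - H x) ∧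
    (∀ x : ℝ, ρ ≤ |x| → ψ |x| ≤ H x)

/-- In the weighted directed graph with weights `a` (an edge from node `j` to
node `i` whenever `a i j > 0`), node `j` is reachable from node `i`. -/
def Reachable {N : ℕ} (a : Fin N → Fin N → ℝ) : Fin N → Fin N → Prop :=
  Relation.ReflTransGen (fun u v => 0 < a v u)

/-- The Laplacian matrix of the weighted directed graph with weights `a`:
`[L]ᵢⱼ = −aᵢⱼ` for `i ≠ j` and `[L]ᵢᵢ = ∑_{ℓ≠i} aᵢℓ`. -/
def lap {N : ℕ} (a : Fin N → Fin N → ℝ) : Matrix (Fin N) (Fin N) ℝ :=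
  Matrix.of fun i j =>
    if i = j then ∑ ℓ ∈ Finset.univ.erase i, a i ℓ else -(a i j)


lemma semipassive_extract {f : ℝ → ℝ} (h : SemiPassive f) :
    ∃ ρ : ℝ, 0 < ρ ∧ ∀ y : ℝ, ρ ≤ |y| → y * f y ≤ 0 := by
  obtain ⟨V, H, ψ, ρ, -, -, -, -, -, hψpos, hρ, hdiss, hHψ⟩ := h
  refine ⟨ρ, hρ, fun y hy => ?_⟩
  -- first: deriv V y = y
  have hder : deriv V y = y := by
    by_contra hne
    have hc0 : deriv V y - y ≠ 0 := sub_ne_zero.mpr hne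
    have hall : ∀ u : ℝ, (deriv V y - y) * u ≤ -H y - (deriv V y) * f y := by
      intro u
      nlinarith [hdiss y u]
    have := hall ((-H y - (deriv V y) * f y + 1) / (deriv V y - y))
    rw [mul_div_cancel₀ _ hc0] at this
    linarith
  have h0 := hdiss y 0
  rw [hder] at h0
  have hψ : 0 < ψ |y| := hψpos _ (abs_nonneg y)
  have := hHψ y hy
  nlinarith


section
variable {N : ℕ} (a : Fin N → Fin N → ℝ)

/-- zero-diagonal weights -/
def qw : Fin N → Fin N → ℝ := fun i j => if i = j then 0 else a i j

lemma lap_eq (i j : Fin N) :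
    lap a i j = (if i = j then ∑ ℓ, qw a i ℓ else 0) - qw a i j := by
  unfold lap qw
  by_cases h : i = j
  · subst h
    have he : ∑ ℓ, (if i = ℓ then 0 else a i ℓ) = ∑ ℓ ∈ Finset.univ.erase i, a i ℓ := by
      rw [← Finset.sum_erase (f := fun ℓ => if i = ℓ then (0:ℝ) else a i ℓ) (a := i) Finset.univ (by simp)]
      exact Finset.sum_congr rfl fun l hl => if_neg (Finset.ne_of_mem_erase hl).symm
    simp [he]
  · simp only [Matrix.of_apply, if_neg h, neg_sub, zero_sub]

lemma lap_row_sum (i : Fin N) : ∑ j, lap a i j = 0 := by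
  simp only [lap_eq a]
  rw [Finset.sum_sub_distrib, Finset.sum_ite_eq]
  simp

lemma lap_col_sum (π : Fin N → ℝ) (j : Fin N) :
    ∑ i, π i * lap a i j = π j * (∑ l, qw a j l) - ∑ i, π i * qw a i j := by
  simp only [lap_eq a, mul_sub]
  rw [Finset.sum_sub_distrib]
  congr 1
  rw [Finset.sum_congr rfl (fun i _ => mul_ite (i = j) (π i) _ 0)]
  simp only [mul_zero]
  rw [Finset.sum_ite_eq' Finset.univ j (fun i => π i * ∑ ℓ, qw a i ℓ)]
  simp

end

lemma sign_lemma {N : ℕ} (a : Fin N → Fin N → ℝ) (ha : ∀ i j, 0 ≤ a i j)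
    (hsc : ∀ i j : Fin N, Reachable a i j) (π : Fin N → ℝ)
    (hbal : ∀ j, ∑ i, π i * lap a i j = 0)
    (i0 : Fin N) (hi0 : 0 < π i0) : ∀ i, 0 < π i := by
  classical
  set q : Fin N → Fin N → ℝ := fun i j => π i * qw a i j with hq
  have hqnn : ∀ i j, 0 < π i → 0 ≤ q i j := by
    intro i j hπ
    by_cases h : i = j
    · simp [hq, qw, h]
    · simp only [hq, qw, if_neg h]
      exact mul_nonneg hπ.le (ha i j)
  have hB : ∀ j, ∑ l, q j l = ∑ i, q i j := by
    intro j
    have h := hbal j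
    rw [lap_col_sum] at h
    have : π j * (∑ l, qw a j l) = ∑ l, q j l := by
      rw [Finset.mul_sum]
    linarith [this ▸ h]
  by_contra hcon
  push_neg at hcon
  obtain ⟨j0, hj0⟩ := hcon
  set S : Finset (Fin N) := Finset.univ.filter (fun i => π i ≤ 0) with hS
  have hj0S : j0 ∈ S := by simp [hS, hj0]
  have key : ∑ j ∈ S, ∑ l ∈ Sᶜ, q j l = ∑ j ∈ S, ∑ i ∈ Sᶜ, q i j := by
    have h3 : ∑ j ∈ S, ∑ l ∈ S, q j l = ∑ j ∈ S, ∑ i ∈ S, q i j := Finset.sum_comm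
    have h4 : ∑ j ∈ S, ∑ l, q j l = ∑ j ∈ S, ∑ i, q i j :=
      Finset.sum_congr rfl (fun j _ => hB j)
    simp only [← Finset.sum_add_sum_compl S, Finset.sum_add_distrib] at h4
    linarith
  have hπpos : ∀ i ∈ Sᶜ, 0 < π i := by
    intro i hi
    have := Finset.mem_compl.mp hi
    simp only [hS, Finset.mem_filter, Finset.mem_univ, true_and, not_le] at this
    linarith
  have hL : ∑ j ∈ S, ∑ l ∈ Sᶜ, q j l ≤ 0 := by
    apply Finset.sum_nonpos; intro j hj
    apply Finset.sum_nonpos; intro l hl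
    have hπj : π j ≤ 0 := (Finset.mem_filter.mp hj).2
    by_cases h : j = l
    · simp [hq, qw, h]
    · simp only [hq, qw, if_neg h]
      exact mul_nonpos_of_nonpos_of_nonneg hπj (ha j l)
  have hRterms : ∀ j ∈ S, ∀ i ∈ Sᶜ, 0 ≤ q i j := fun j _ i hi => hqnn i j (hπpos i hi)
  have hR0 : ∑ j ∈ S, ∑ i ∈ Sᶜ, q i j = 0 :=
    le_antisymm (key ▸ hL) (Finset.sum_nonneg fun j hj => Finset.sum_nonneg (hRterms j hj))
  have hzero : ∀ j ∈ S, ∀ i ∈ Sᶜ, q i j = 0 := by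
    intro j hj i hi
    have h1 : ∀ j ∈ S, ∑ i ∈ Sᶜ, q i j = 0 := by
      intro j' hj'
      have := (Finset.sum_eq_zero_iff_of_nonneg
        (fun j'' hj'' => Finset.sum_nonneg (hRterms j'' hj''))).mp hR0
      exact this j' hj'
    exact (Finset.sum_eq_zero_iff_of_nonneg (hRterms j hj)).mp (h1 j hj) i hi
  -- no edge into S-complement from S: for i ∉ S, j ∈ S, a i j = 0
  have hedge : ∀ j ∈ S, ∀ i ∈ Sᶜ, a i j = 0 := by
    intro j hj i hi
    have hz := hzero j hj i hi
    by_cases h : i = j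
    · exact absurd (h ▸ hj) (Finset.mem_compl.mp hi)
    · simp only [hq, qw, if_neg h] at hz
      rcases mul_eq_zero.mp hz with h' | h'
      · exact absurd h' (ne_of_gt (hπpos i hi))
      · exact h'
  -- S is closed under reachability
  have hclosed : ∀ {u w : Fin N}, Reachable a u w → u ∈ S → w ∈ S := by
    intro u w h hu
    induction h with
    | refl => exact hu
    | tail h1 h2 ih =>
      rename_i b c
      by_contra hc
      have : c ∈ Sᶜ := Finset.mem_compl.mpr hc
      have := hedge b ih c this
      linarith
  have : i0 ∈ S := hclosed (hsc j0 i0) hj0S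
  have : π i0 ≤ 0 := (Finset.mem_filter.mp this).2
  linarith

lemma perron_exists {N : ℕ} (hN : 0 < N) (a : Fin N → Fin N → ℝ)
    (ha : ∀ i j, 0 ≤ a i j) (hsc : ∀ i j : Fin N, Reachable a i j) :
    ∃ π : Fin N → ℝ, (∀ i, 0 < π i) ∧ ∀ j, ∑ i, π i * lap a i j = 0 := by
  have : Nonempty (Fin N) := ⟨⟨0, hN⟩⟩
  have hdet : (lap a).det = 0 := by
    rw [← Matrix.exists_mulVec_eq_zero_iff]
    refine ⟨fun _ => 1, ?_, ?_⟩
    · intro h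
      have := congrFun h (Classical.arbitrary (Fin N))
      simp at this
    · funext i
      simp [Matrix.mulVec, dotProduct, lap_row_sum a i]
  have hdetT : (lap a).transpose.det = 0 := by rw [Matrix.det_transpose]; exact hdet
  obtain ⟨π, hπ0, hπ⟩ := Matrix.exists_mulVec_eq_zero_iff.mpr hdetT
  have hbal : ∀ j, ∑ i, π i * lap a i j = 0 := by
    intro j
    have := congrFun hπ j
    simpa [Matrix.mulVec, dotProduct, Matrix.transpose_apply, mul_comm] using this
  obtain ⟨i0, hi0⟩ : ∃ i0, π i0 ≠ 0 := by
    by_contra h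
    push_neg at h
    exact hπ0 (funext h)
  rcases lt_or_gt_of_ne hi0 with h | h
  · refine ⟨fun i => -π i, sign_lemma a ha hsc _ ?_ i0 (by linarith), fun j => ?_⟩
    · intro j
      have := hbal j
      simp only [neg_mul]
      rw [Finset.sum_neg_distrib]
      linarith
    · have := hbal j
      simp only [neg_mul]
      rw [Finset.sum_neg_distrib]
      linarith
  · exact ⟨π, sign_lemma a ha hsc π hbal i0 h, hbal⟩

lemma lap_quad {N : ℕ} (a : Fin N → Fin N → ℝ) (π : Fin N → ℝ)
    (hbal : ∀ j, ∑ i, π i * lap a i j = 0) (y : Fin N → ℝ) :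
    ∑ k, π k * y k * (∑ l, lap a k l * y l)
      = (1/2) * ∑ k, ∑ l, (π k * qw a k l) * (y k - y l)^2 := by
  have hB : ∀ j, ∑ l, π j * qw a j l = ∑ i, π i * qw a i j := by
    intro j
    have h := hbal j
    rw [lap_col_sum] at h
    rw [← Finset.mul_sum]
    linarith
  set S1 := ∑ k, ∑ l, (π k * qw a k l) * y k^2 with hS1
  set S2 := ∑ k, ∑ l, (π k * qw a k l) * (y k * y l) with hS2
  set S3 := ∑ k, ∑ l, (π k * qw a k l) * y l^2 with hS3
  have hstar : S3 = S1 := by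
    rw [hS3, hS1, Finset.sum_comm]
    calc ∑ l, ∑ k, π k * qw a k l * y l ^ 2
        = ∑ l, (∑ k, π k * qw a k l) * y l ^ 2 := by
          exact Finset.sum_congr rfl fun l _ => (Finset.sum_mul _ _ _).symm
      _ = ∑ l, (∑ m, π l * qw a l m) * y l ^ 2 := by
          exact Finset.sum_congr rfl fun l _ => by rw [hB l]
      _ = ∑ k, ∑ l, π k * qw a k l * y k ^ 2 := by
          exact Finset.sum_congr rfl fun l _ => Finset.sum_mul _ _ _
  have e1 : ∑ k, π k * y k * (∑ l, lap a k l * y l) = S1 - S2 := by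
    rw [hS1, hS2, ← Finset.sum_sub_distrib]
    apply Finset.sum_congr rfl
    intro k _
    have hin : ∑ l, lap a k l * y l = (∑ l, qw a k l) * y k - ∑ l, qw a k l * y l := by
      simp only [lap_eq a, sub_mul]
      rw [Finset.sum_sub_distrib]
      congr 1
      rw [Finset.sum_congr rfl (fun l _ => ite_mul (k = l) _ 0 (y l))]
      simp only [zero_mul]
      rw [Finset.sum_ite_eq Finset.univ k (fun l => (∑ m, qw a k m) * y l)]
      simp [Finset.sum_mul]
    rw [hin]
    simp only [mul_sub, Finset.sum_mul, Finset.mul_sum]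
    congr 1 <;> exact Finset.sum_congr rfl fun l _ => by ring
  have e2 : ∑ k, ∑ l, (π k * qw a k l) * (y k - y l)^2 = S1 + S3 - 2*S2 := by
    rw [hS1, hS2, hS3]
    rw [Finset.mul_sum, ← Finset.sum_add_distrib, ← Finset.sum_sub_distrib]
    apply Finset.sum_congr rfl
    intro k _
    rw [Finset.mul_sum, ← Finset.sum_add_distrib, ← Finset.sum_sub_distrib]
    apply Finset.sum_congr rfl
    intro l _
    ring
  rw [e1, e2, hstar]
  ring

lemma chain_bound {N : ℕ} (a : Fin N → Fin N → ℝ) (y : Fin N → ℝ) (Δ : ℝ) (hΔ : 0 ≤ Δ)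
    (hedge : ∀ u v : Fin N, 0 < a v u → |y v - y u| ≤ Δ) :
    ∀ (l : List (Fin N)) (i : Fin N), List.Chain (fun u v => 0 < a v u) i l →
      |y ((i :: l).getLast (List.cons_ne_nil _ _)) - y i| ≤ l.length * Δ := by
  intro l
  induction l with
  | nil => intro i _; simp
  | cons w tl ih =>
    intro i hch
    rw [List.Chain, List.isChain_cons_cons] at hch
    have h1 := hedge i w hch.1
    have h2 := ih w hch.2
    have hlast : (i :: w :: tl).getLast (List.cons_ne_nil _ _)
        = (w :: tl).getLast (List.cons_ne_nil _ _) := List.getLast_cons _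
    rw [hlast]
    have htri : |y ((w :: tl).getLast (List.cons_ne_nil _ _)) - y i|
        ≤ |y ((w :: tl).getLast (List.cons_ne_nil _ _)) - y w| + |y w - y i| := by
      have := abs_sub_abs_le_abs_sub (y ((w :: tl).getLast (List.cons_ne_nil _ _)) - y i) 0
      calc |y ((w :: tl).getLast (List.cons_ne_nil _ _)) - y i|
          = |(y ((w :: tl).getLast (List.cons_ne_nil _ _)) - y w) + (y w - y i)| := by ring_nf
        _ ≤ _ := abs_add_le _ _
    have hlen : ((w :: tl).length : ℝ) = tl.length + 1 := by simp
    calc |y ((w :: tl).getLast (List.cons_ne_nil _ _)) - y i|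
        ≤ |y ((w :: tl).getLast (List.cons_ne_nil _ _)) - y w| + |y w - y i| := htri
      _ ≤ tl.length * Δ + Δ := add_le_add h2 h1
      _ = (w :: tl).length * Δ := by rw [hlen]; ring


set_option maxHeartbeats 2000000 in
/-- Boundedness of solutions of a strongly connected network of semi-passive
systems `ẋ̄ = F(x̄) − L x̄ − D x̄ + ∑ⱼ Bⱼ vⱼ(t)`, where the `Bⱼ` have
nonnegative entries, `D = diag(d)` with `dₖ = ∑ⱼ ∑ₗ [Bⱼ]ₖₗ`, and the external
inputs `vⱼ` are bounded. -/
theorem perturbed_network_bounded_of_semipassive_of_strongly_connected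
    (N : ℕ) (hN : 0 < N)
    (f : Fin N → ℝ → ℝ)
    (hf : ∀ i, Continuous (f i))
    (hsp : ∀ i, SemiPassive (f i))
    (a : Fin N → Fin N → ℝ)
    (ha : ∀ i j, 0 ≤ a i j)
    (hsc : ∀ i j : Fin N, Reachable a i j)
    (p : ℕ) (hp : 1 ≤ p)
    (M : Fin p → ℕ)
    (B : ∀ j : Fin p, Matrix (Fin N) (Fin (M j)) ℝ)
    (hB : ∀ j k ℓ, 0 ≤ B j k ℓ)
    (d : Fin N → ℝ)
    (hd : ∀ k : Fin N, d k = ∑ j : Fin p, ∑ ℓ : Fin (M j), B j k ℓ)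
    (v : ∀ j : Fin p, ℝ → Fin (M j) → ℝ)
    (hv : ∀ j : Fin p, ∃ c : ℝ, ∀ t : ℝ, 0 ≤ t → ∀ ℓ, |v j t ℓ| ≤ c)
    (x : ℝ → Fin N → ℝ)
    (hx : ∀ k : Fin N, ∀ t ∈ Set.Ici (0 : ℝ),
      HasDerivWithinAt (fun s => x s k)
        (f k (x t k) - (∑ l : Fin N, lap a k l * x t l) - d k * x t k
          + ∑ j : Fin p, ∑ ℓ : Fin (M j), B j k ℓ * v j t ℓ)
        (Set.Ici 0) t) :
    ∃ c : ℝ, ∀ t ∈ Set.Ici (0 : ℝ), ∀ k : Fin N, |x t k| ≤ c := by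
  classical
  haveI : Nonempty (Fin N) := ⟨⟨0, hN⟩⟩
  have hune : (Finset.univ : Finset (Fin N)).Nonempty := Finset.univ_nonempty
  -- semipassivity data
  choose ρ hρpos hρ0 using fun k => semipassive_extract (hsp k)
  -- compact bounds
  have hCex : ∀ k : Fin N, ∃ Ck : ℝ, ∀ z : ℝ, |z| ≤ ρ k → z * f k z ≤ Ck := by
    intro k
    obtain ⟨Ck, hCk⟩ := (isCompact_Icc (a := -(ρ k)) (b := ρ k)).exists_bound_of_continuousOn
      ((continuous_id.mul (hf k)).continuousOn)
    refine ⟨Ck, fun z hz => ?_⟩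
    have := hCk z (abs_le.mp hz |> fun h => ⟨h.1, h.2⟩)
    rw [Real.norm_eq_abs] at this
    calc z * f k z ≤ |z * f k z| := le_abs_self _
      _ ≤ Ck := this
  choose C hC using hCex
  -- input bound
  choose cj hcj using hv
  set c : ℝ := ∑ j, max (cj j) 0 with hc_def
  have hc0 : 0 ≤ c := Finset.sum_nonneg fun j _ => le_max_right _ _
  have hvc : ∀ j (t : ℝ), 0 ≤ t → ∀ ℓ, |v j t ℓ| ≤ c := by
    intro j t ht ℓ
    calc |v j t ℓ| ≤ cj j := hcj j t ht ℓ
      _ ≤ max (cj j) 0 := le_max_left _ _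
      _ ≤ c := Finset.single_le_sum (fun j _ => le_max_right (cj j) 0) (Finset.mem_univ j)
  -- d nonneg
  have hd0 : ∀ k, 0 ≤ d k := by
    intro k
    rw [hd k]
    exact Finset.sum_nonneg fun j _ => Finset.sum_nonneg fun ℓ _ => hB j k ℓ
  -- Perron vector
  obtain ⟨π, hπpos, hbal⟩ := perron_exists hN a ha hsc
  -- constants
  set R : ℝ := Finset.univ.sup' hune (fun k => max (ρ k) c) with hR_def
  have hRρ : ∀ k, ρ k ≤ R := fun k =>
    le_trans (le_max_left _ _)
      (Finset.le_sup' (f := fun k => max (ρ k) c) (Finset.mem_univ k))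
  have hRc : c ≤ R :=
    le_trans (le_max_right (ρ (Classical.arbitrary (Fin N))) c)
      (Finset.le_sup' (f := fun k => max (ρ k) c) (Finset.mem_univ _))
  set A : ℝ := ∑ k, π k * (max (C k) 0 + d k * c^2/4) with hA_def
  have hA0 : 0 ≤ A := Finset.sum_nonneg fun k _ => mul_nonneg (hπpos k).le
    (by
      have h1 : (0:ℝ) ≤ max (C k) 0 := le_max_right _ _
      have h2 : (0:ℝ) ≤ d k * c^2/4 := by 
        have := hd0 k
        positivity
      linarith)
  -- per-coordinate bounds  φ k z := z * f k z + d k * (c * |z| - z^2)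
  have hφ_bound : ∀ (k : Fin N) (z : ℝ),
      z * f k z + d k * (c * |z| - z^2) ≤ max (C k) 0 + d k * c^2/4 := by
    intro k z
    have h2 : d k * (c * |z| - z^2) ≤ d k * (c^2/4) := by
      apply mul_le_mul_of_nonneg_left _ (hd0 k)
      nlinarith [sq_nonneg (|z| - c/2), sq_abs z]
    rcases le_or_gt (|z|) (ρ k) with h | h
    · have := hC k z h
      have hle : z * f k z ≤ max (C k) 0 := le_trans this (le_max_left _ _)
      linarith
    · have := hρ0 k z h.le
      have hle : z * f k z ≤ max (C k) 0 := le_trans this (le_max_right _ _)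
      linarith
  have hφ_neg : ∀ (k : Fin N) (z : ℝ), R ≤ |z| →
      z * f k z + d k * (c * |z| - z^2) ≤ 0 := by
    intro k z hz
    have h1 : z * f k z ≤ 0 := hρ0 k z (le_trans (hRρ k) hz)
    have hcz : c ≤ |z| := le_trans hRc hz
    have h2 : d k * (c * |z| - z^2) ≤ 0 := by
      apply mul_nonpos_of_nonneg_of_nonpos (hd0 k)
      nlinarith [abs_nonneg z, sq_abs z]
    linarith
  -- minimum positive edge weight
  set w0 : ℝ := Finset.univ.inf' (Finset.univ_nonempty)
    (fun pr : Fin N × Fin N => if 0 < a pr.1 pr.2 ∧ pr.1 ≠ pr.2 then π pr.1 * a pr.1 pr.2 else 1)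
    with hw0_def
  have hw0pos : 0 < w0 := by
    rw [hw0_def, Finset.lt_inf'_iff]
    intro pr _
    by_cases h : 0 < a pr.1 pr.2 ∧ pr.1 ≠ pr.2
    · rw [if_pos h]; exact mul_pos (hπpos pr.1) h.1
    · rw [if_neg h]; norm_num
  have hw0le : ∀ u w : Fin N, 0 < a w u → w ≠ u → w0 ≤ π w * a w u := by
    intro u w h hne
    have := Finset.inf'_le (b := (w, u))
      (f := fun pr : Fin N × Fin N => if 0 < a pr.1 pr.2 ∧ pr.1 ≠ pr.2 then π pr.1 * a pr.1 pr.2 else 1)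
      (Finset.mem_univ _)
    rw [if_pos ⟨h, hne⟩] at this
    exact this
  -- chain data
  have hchex : ∀ i j : Fin N, ∃ l : List (Fin N),
      List.Chain (fun u w => 0 < a w u) i l ∧ (i :: l).getLast (List.cons_ne_nil _ _) = j :=
    fun i j => List.exists_isChain_cons_of_relationReflTransGen (hsc i j)
  choose L hL1 hL2 using hchex
  set n : ℕ := Finset.univ.sup (fun pr : Fin N × Fin N => (L pr.1 pr.2).length) with hn_def
  set Δ : ℝ := Real.sqrt (2*A / w0) with hΔ_def
  have hΔ0 : 0 ≤ Δ := Real.sqrt_nonneg _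
  set Rstar : ℝ := R + n * Δ + 1 with hRstar_def

  have hqwnn : ∀ k l : Fin N, 0 ≤ qw a k l := by
    intro k l
    unfold qw
    by_cases h : k = l
    · simp [h]
    · simp [h, ha k l]
  -- core derivative-sign estimate
  have hcore : ∀ t : ℝ, 0 ≤ t → (∃ k, Rstar < |x t k|) →
      (∑ k, π k * (2 * x t k * (f k (x t k) - (∑ l, lap a k l * x t l) - d k * x t k
        + ∑ j, ∑ ℓ, B j k ℓ * v j t ℓ))) ≤ 0 := by
    intro t ht hex
    set y : Fin N → ℝ := fun k => x t k with hy_def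
    set Sv : Fin N → ℝ := fun k => ∑ j, ∑ ℓ, B j k ℓ * v j t ℓ with hSv_def
    have hSv : ∀ k, y k * Sv k ≤ d k * (c * |y k|) := by
      intro k
      have habsSv : |Sv k| ≤ d k * c := by
        calc |Sv k| ≤ ∑ j, |∑ ℓ, B j k ℓ * v j t ℓ| := Finset.abs_sum_le_sum_abs _ _
          _ ≤ ∑ j, ∑ ℓ, |B j k ℓ * v j t ℓ| :=
              Finset.sum_le_sum fun j _ => Finset.abs_sum_le_sum_abs _ _
          _ ≤ ∑ j, ∑ ℓ, B j k ℓ * c := by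
              apply Finset.sum_le_sum
              intro j _
              apply Finset.sum_le_sum
              intro ℓ _
              rw [abs_mul, abs_of_nonneg (hB j k ℓ)]
              exact mul_le_mul_of_nonneg_left (hvc j t ht ℓ) (hB j k ℓ)
          _ = d k * c := by
              rw [hd k, Finset.sum_mul]
              exact Finset.sum_congr rfl fun j _ => (Finset.sum_mul _ _ _).symm
      calc y k * Sv k ≤ |y k * Sv k| := le_abs_self _
        _ = |y k| * |Sv k| := abs_mul _ _
        _ ≤ |y k| * (d k * c) := mul_le_mul_of_nonneg_left habsSv (abs_nonneg _)
        _ = d k * (c * |y k|) := by ring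
    set Q : ℝ := ∑ k, ∑ l, (π k * qw a k l) * (y k - y l)^2 with hQ_def
    have hQtermnn : ∀ (k l : Fin N), 0 ≤ (π k * qw a k l) * (y k - y l)^2 :=
      fun k l => mul_nonneg (mul_nonneg (hπpos k).le (hqwnn k l)) (sq_nonneg _)
    have hQ0 : 0 ≤ Q :=
      Finset.sum_nonneg fun k _ => Finset.sum_nonneg fun l _ => hQtermnn k l
    have hE : (∑ k, π k * (2 * x t k * (f k (x t k) - (∑ l, lap a k l * x t l) - d k * x t k
          + ∑ j, ∑ ℓ, B j k ℓ * v j t ℓ)))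
        = 2 * (∑ k, π k * (y k * f k (y k) - d k * y k^2 + y k * Sv k)) - Q := by
      have step1 : (∑ k, π k * (2 * x t k * (f k (x t k) - (∑ l, lap a k l * x t l) - d k * x t k
            + ∑ j, ∑ ℓ, B j k ℓ * v j t ℓ)))
          = ∑ k, (2 * (π k * (y k * f k (y k) - d k * y k^2 + y k * Sv k))
              - 2 * (π k * y k * (∑ l, lap a k l * y l))) := by
        apply Finset.sum_congr rfl
        intro k _
        simp only [hy_def, hSv_def]
        ring
      rw [step1, Finset.sum_sub_distrib, ← Finset.mul_sum, ← Finset.mul_sum,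
        lap_quad a π hbal y]
      ring
    have hΦ' : (∑ k, π k * (y k * f k (y k) - d k * y k^2 + y k * Sv k))
        ≤ ∑ k, π k * (y k * f k (y k) + d k * (c * |y k| - y k^2)) := by
      apply Finset.sum_le_sum
      intro k _
      apply mul_le_mul_of_nonneg_left _ (hπpos k).le
      have := hSv k
      linarith
    by_cases hall : ∀ k, R ≤ |y k|
    · have hΦ0 : (∑ k, π k * (y k * f k (y k) + d k * (c * |y k| - y k^2))) ≤ 0 :=
        Finset.sum_nonpos fun k _ =>
          mul_nonpos_of_nonneg_of_nonpos (hπpos k).le (hφ_neg k (y k) (hall k))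
      rw [hE]
      linarith
    · push_neg at hall
      obtain ⟨k1, hk1⟩ := hall
      have hΦA : (∑ k, π k * (y k * f k (y k) + d k * (c * |y k| - y k^2))) ≤ A := by
        rw [hA_def]
        exact Finset.sum_le_sum fun k _ =>
          mul_le_mul_of_nonneg_left (hφ_bound k (y k)) (hπpos k).le
      have hQA : 2 * A ≤ Q := by
        by_contra hQlt
        push_neg at hQlt
        have hedge : ∀ u w : Fin N, 0 < a w u → |y w - y u| ≤ Δ := by
          intro u w hww
          by_cases hwu : w = u
          · simp [hwu, hΔ0]
          · have h1 : (π w * qw a w u) * (y w - y u)^2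
                ≤ ∑ l, (π w * qw a w l) * (y w - y l)^2 :=
              Finset.single_le_sum (fun l _ => hQtermnn w l) (Finset.mem_univ u)
            have h2 : (∑ l, (π w * qw a w l) * (y w - y l)^2) ≤ Q :=
              Finset.single_le_sum
                (fun k _ => Finset.sum_nonneg fun l _ => hQtermnn k l) (Finset.mem_univ w)
            have hterm := h1.trans h2
            have hqw : qw a w u = a w u := if_neg hwu
            have hw0 : w0 ≤ π w * a w u := hw0le u w hww hwu
            have hsq : (y w - y u)^2 ≤ 2*A/w0 := by
              rw [le_div_iff₀ hw0pos]
              rw [hqw] at hterm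
              nlinarith [sq_nonneg (y w - y u)]
            calc |y w - y u| = Real.sqrt ((y w - y u)^2) := (Real.sqrt_sq_eq_abs _).symm
              _ ≤ Real.sqrt (2*A/w0) := Real.sqrt_le_sqrt hsq
              _ = Δ := rfl
        obtain ⟨k0, hk0⟩ := hex
        have hchain := chain_bound a y Δ hΔ0 hedge (L k1 k0) k1 (hL1 k1 k0)
        rw [hL2 k1 k0] at hchain
        have hlen : ((L k1 k0).length : ℝ) ≤ (n : ℝ) := by
          exact_mod_cast Finset.le_sup
            (f := fun pr : Fin N × Fin N => (L pr.1 pr.2).length) (Finset.mem_univ (k1, k0))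
        have hnd : |y k0 - y k1| ≤ (n : ℝ) * Δ :=
          hchain.trans (mul_le_mul_of_nonneg_right hlen hΔ0)
        have habs : |y k0| - |y k1| ≤ |y k0 - y k1| := abs_sub_abs_le_abs_sub _ _
        have hyk0 : Rstar < |y k0| := hk0
        rw [hRstar_def] at hyk0
        linarith
      rw [hE]
      linarith

  -- Lyapunov function
  set W : ℝ → ℝ := fun s => ∑ k, π k * (x s k)^2 with hW_def
  set D : ℝ → ℝ := fun t => ∑ k, π k * (2 * x t k * (f k (x t k)
    - (∑ l, lap a k l * x t l) - d k * x t k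
    + ∑ j, ∑ ℓ, B j k ℓ * v j t ℓ)) with hD_def
  have hWd : ∀ t ∈ Set.Ici (0:ℝ), HasDerivWithinAt W (D t) (Set.Ici 0) t := by
    intro t ht
    have hsum := HasDerivWithinAt.sum (u := Finset.univ)
      (A := fun k s => π k * (x s k)^2)
      (A' := fun k => π k * ((2:ℕ) * x t k ^ (2-1) * (f k (x t k)
        - (∑ l, lap a k l * x t l) - d k * x t k
        + ∑ j, ∑ ℓ, B j k ℓ * v j t ℓ)))
      (fun k _ => ((hx k t ht).pow 2).const_mul (π k))
    convert hsum using 1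
    · rfl
    · rfl
    · ext s
      simp only [hW_def, Finset.sum_apply]
    apply Finset.sum_congr rfl
    intro k _
    push_cast
    ring
  have hWc : ContinuousOn W (Set.Ici 0) := fun t ht => (hWd t ht).continuousWithinAt
  set B0 : ℝ := max (W 0) ((∑ k, π k) * Rstar^2) with hB0_def
  have hWB : ∀ t ∈ Set.Ici (0:ℝ), W t ≤ B0 := by
    intro t1 ht1
    by_contra hc1
    push_neg at hc1
    have hW0 : W 0 ≤ B0 := le_max_left _ _
    have ht1pos : 0 < t1 := by
      rcases eq_or_lt_of_le (Set.mem_Ici.mp ht1) with h | h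
      · exfalso; rw [← h] at hc1; linarith
      · exact h
    set Sset : Set ℝ := Set.Icc 0 t1 ∩ W ⁻¹' (Set.Iic B0) with hSset_def
    have hSclosed : IsClosed Sset :=
      ContinuousOn.preimage_isClosed_of_isClosed
        (hWc.mono (fun s hs => hs.1)) isClosed_Icc isClosed_Iic
    have hScomp : IsCompact Sset :=
      IsCompact.of_isClosed_subset isCompact_Icc hSclosed Set.inter_subset_left
    have h0mem : (0:ℝ) ∈ Sset := ⟨⟨le_refl 0, ht1pos.le⟩, hW0⟩
    set t0 : ℝ := sSup Sset with ht0_def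
    have ht0mem : t0 ∈ Sset := hScomp.sSup_mem ⟨0, h0mem⟩
    have ht00 : 0 ≤ t0 := ht0mem.1.1
    have hWt0 : W t0 ≤ B0 := ht0mem.2
    have ht0lt : t0 < t1 := lt_of_le_of_ne ht0mem.1.2 (fun h => by rw [h] at hWt0; linarith)
    have hgt : ∀ s : ℝ, t0 < s → s ≤ t1 → B0 < W s := by
      intro s hs1 hs2
      by_contra h
      push_neg at h
      have hsmem : s ∈ Sset := ⟨⟨le_trans ht00 hs1.le, hs2⟩, h⟩
      have := le_csSup hScomp.bddAbove hsmem
      linarith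
    have hanti : AntitoneOn W (Set.Icc t0 t1) := by
      apply antitoneOn_of_deriv_nonpos (convex_Icc _ _)
      · exact hWc.mono (fun s hs => le_trans ht00 hs.1)
      · intro s hs
        rw [interior_Icc] at hs
        have hspos : 0 < s := lt_of_le_of_lt ht00 hs.1
        exact ((hWd s hspos.le).hasDerivAt
          (Ici_mem_nhds hspos)).differentiableAt.differentiableWithinAt
      · intro s hs
        rw [interior_Icc] at hs
        have hspos : 0 < s := lt_of_le_of_lt ht00 hs.1
        have hda := (hWd s hspos.le).hasDerivAt (Ici_mem_nhds hspos)
        rw [hda.deriv]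
        apply hcore s hspos.le
        by_contra hnk
        push_neg at hnk
        have hWle : W s ≤ (∑ k, π k) * Rstar^2 := by
          calc W s ≤ ∑ k, π k * Rstar^2 := by
                apply Finset.sum_le_sum
                intro k _
                apply mul_le_mul_of_nonneg_left _ (hπpos k).le
                nlinarith [hnk k, abs_nonneg (x s k), sq_abs (x s k)]
            _ = (∑ k, π k) * Rstar^2 := (Finset.sum_mul _ _ _).symm
        have hgs := hgt s hs.1 hs.2.le
        have : W s ≤ B0 := le_trans hWle (le_max_right _ _)
        linarith
    have hfin := hanti (Set.left_mem_Icc.mpr ht0lt.le) (Set.right_mem_Icc.mpr ht0lt.le) ht0lt.le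
    linarith [hgt t1 ht0lt le_rfl]
  -- conclusion
  set πmin : ℝ := Finset.univ.inf' hune π with hπmin_def
  have hπminpos : 0 < πmin := by
    rw [hπmin_def, Finset.lt_inf'_iff]
    exact fun k _ => hπpos k
  refine ⟨Real.sqrt (B0 / πmin), fun t ht k => ?_⟩
  have h1 : π k * (x t k)^2 ≤ W t :=
    Finset.single_le_sum (fun k _ => mul_nonneg (hπpos k).le (sq_nonneg _)) (Finset.mem_univ k)
  have h2 := hWB t ht
  have hπk : πmin ≤ π k := Finset.inf'_le _ (Finset.mem_univ k)
  have hsq : (x t k)^2 ≤ B0 / πmin := by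
    rw [le_div_iff₀ hπminpos]
    nlinarith [sq_nonneg (x t k)]
  calc |x t k| = Real.sqrt ((x t k)^2) := (Real.sqrt_sq_eq_abs _).symm
    _ ≤ Real.sqrt (B0 / πmin) := Real.sqrt_le_sqrt hsq
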